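/- Let $X_1, X_2, \dots$ be i.i.d. centered random variables with unit variance and finite variance, and define $\overline{X}_i = \frac1i \sum_{j=1}^i X_j$. Then the variance of $\frac{1}{\sqrt n}\sum_{i=1}^n \overline{X}_i$ equals $\frac1n \sum_{j=1}^n w_{j,n}^2$ with $w_{j,n} = \sum_{i=j}^n 1/i$, and this converges to $2$ as $n \to \infty$. -/

import Mathlib

open MeasureTheory ProbabilityTheory Filter Finset

lemma sum_w (n : ℕ) : ∑ j ∈ Icc 1 n, ∑ i ∈ Icc j n, (1 / (i : ℝ)) = n := by
  induction n with
  | zero => simp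
  | succ n ih =>
    rw [Finset.sum_Icc_succ_top (by omega)]
    have h1 : ∀ j ∈ Icc 1 n, ∑ i ∈ Icc j (n+1), (1/(i:ℝ)) =
        (∑ i ∈ Icc j n, (1/(i:ℝ))) + 1/((n:ℝ)+1) := by
      intro j hj
      rw [Finset.sum_Icc_succ_top (by simp at hj; omega)]
      push_cast; ring
    rw [Finset.sum_congr rfl h1, Finset.sum_add_distrib, ih, Finset.sum_const, Icc_self,
      Finset.sum_singleton]
    have hn : (1:ℝ)/((n:ℝ)+1) ≠ 0 := by positivity
    rw [Nat.card_Icc]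
    push_cast [nsmul_eq_mul]
    field_simp
    ring

lemma sum_w_sq (n : ℕ) : ∑ j ∈ Icc 1 n, (∑ i ∈ Icc j n, (1 / (i : ℝ)))^2
    = 2 * n - ∑ i ∈ Icc 1 n, (1 / (i : ℝ)) := by
  induction n with
  | zero => simp
  | succ n ih =>
    rw [Finset.sum_Icc_succ_top (a := 1) (by omega), Finset.sum_Icc_succ_top (a := 1) (by omega)]
    have h1 : ∀ j ∈ Icc 1 n, (∑ i ∈ Icc j (n+1), (1/(i:ℝ)))^2 =
        (∑ i ∈ Icc j n, (1/(i:ℝ)))^2 + 2 * (1/((n:ℝ)+1)) * ∑ i ∈ Icc j n, (1/(i:ℝ))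
          + (1/((n:ℝ)+1))^2 := by
      intro j hj
      rw [Finset.sum_Icc_succ_top (by simp at hj; omega)]
      push_cast; ring
    rw [Finset.sum_congr rfl h1]
    simp only [Finset.sum_add_distrib, Finset.sum_const, ih, ← Finset.mul_sum, sum_w,
      Icc_self, Finset.sum_singleton, Nat.card_Icc]
    have hn : ((n:ℝ)+1) ≠ 0 := by positivity
    push_cast [nsmul_eq_mul]
    field_simp
    ring

lemma range_to_Icc (n : ℕ) : ∑ i ∈ range (n+1), (1/(i:ℝ)) = ∑ i ∈ Icc 1 n, (1/(i:ℝ)) := by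
  induction n with
  | zero => simp
  | succ n ih => rw [Finset.sum_range_succ, ih, Finset.sum_Icc_succ_top (by omega)]

lemma harm_div : Tendsto (fun n : ℕ => (n:ℝ)⁻¹ * ∑ i ∈ Icc 1 n, (1/(i:ℝ))) atTop (nhds 0) := by
  have hu : Tendsto (fun i : ℕ => (1/(i:ℝ))) atTop (nhds 0) := by
    simpa using tendsto_one_div_atTop_nhds_zero_nat (𝕜 := ℝ)
  have hb := hu.cesaro
  have hb' : Tendsto (fun n : ℕ => ((n:ℝ)+1)⁻¹ * ∑ i ∈ range (n+1), (1/(i:ℝ)))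
      atTop (nhds 0) := by
    have h := hb.comp (tendsto_add_atTop_nat 1)
    simp only [Function.comp_def] at h
    push_cast at h
    exact h
  have hr : Tendsto (fun n : ℕ => ((n:ℝ)+1)/n) atTop (nhds 1) := by
    have h1 : Tendsto (fun n : ℕ => 1 + 1/(n:ℝ)) atTop (nhds 1) := by
      simpa using (tendsto_const_nhds (x := (1:ℝ))).add (tendsto_one_div_atTop_nhds_zero_nat (𝕜 := ℝ))
    apply h1.congr'
    filter_upwards [eventually_ge_atTop 1] with n hn
    have : (n:ℝ) ≠ 0 := by positivity
    field_simp
  have := hr.mul hb'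
  rw [one_mul] at this
  apply this.congr'
  filter_upwards [eventually_ge_atTop 1] with n hn
  have hn0 : (n:ℝ) ≠ 0 := by
    have : (0:ℝ) < n := by exact_mod_cast hn
    linarith
  have hn1 : ((n:ℝ)+1) ≠ 0 := by positivity
  rw [range_to_Icc]
  field_simp

lemma swap_sum (X : ℕ → ℝ) (n : ℕ) :
    ∑ i ∈ Icc 1 n, (1/(i:ℝ)) * ∑ j ∈ Icc 1 i, X j
      = ∑ j ∈ Icc 1 n, (∑ i ∈ Icc j n, (1/(i:ℝ))) * X j := by
  simp only [Finset.mul_sum]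
  rw [Finset.sum_comm' (t' := Icc 1 n) (s' := fun j => Icc j n)
    (fun i j => by simp only [mem_Icc]; omega)]
  simp only [← Finset.sum_mul]

/-- For i.i.d. centered unit-variance random variables, the variance of
`(1/√n) ∑_{i=1}^n X̄_i` equals `(1/n) ∑_{j=1}^n w_{j,n}²` where `w_{j,n} = ∑_{i=j}^n 1/i`,
and this converges to `2` as `n → ∞`. -/
theorem variance_of_cesaro_sample_means {Ω : Type*} [MeasurableSpace Ω] (μ : Measure Ω)
    [IsProbabilityMeasure μ] (X : ℕ → Ω → ℝ)
    (hmeas : ∀ i, Measurable (X i))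
    (hindep : iIndepFun X μ)
    (hident : ∀ i, Measure.map (X i) μ = Measure.map (X 0) μ)
    (hL2 : ∀ i, MemLp (X i) 2 μ)
    (hmean : μ[X 0] = 0) (hvar : variance (X 0) μ = 1) :
    (∀ n : ℕ, 1 ≤ n →
      variance (fun ω => (1 / Real.sqrt n) * ∑ i ∈ Finset.Icc 1 n,
          (1 / (i : ℝ)) * ∑ j ∈ Finset.Icc 1 i, X j ω) μ
        = (1 / (n : ℝ)) * ∑ j ∈ Finset.Icc 1 n,
            (∑ i ∈ Finset.Icc j n, (1 / (i : ℝ))) ^ 2) ∧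
    Tendsto (fun n : ℕ => (1 / (n : ℝ)) * ∑ j ∈ Finset.Icc 1 n,
        (∑ i ∈ Finset.Icc j n, (1 / (i : ℝ))) ^ 2) atTop (nhds 2) := by
  constructor
  · intro n hn
    set c : ℕ → ℝ := fun j => ∑ i ∈ Icc j n, 1/(i:ℝ) with hc
    have hfun : (fun ω => (1 / Real.sqrt n) * ∑ i ∈ Finset.Icc 1 n,
            (1 / (i : ℝ)) * ∑ j ∈ Finset.Icc 1 i, X j ω)
        = (1 / Real.sqrt n) • (∑ j ∈ Icc 1 n, (c j) • X j) := by
      funext ω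
      simp only [Pi.smul_apply, Finset.sum_apply, smul_eq_mul]
      congr 1
      exact swap_sum (fun j => X j ω) n
    rw [hfun, variance_smul, IndepFun.variance_sum]
    · have hvj : ∀ j, variance (X j) μ = 1 := by
        intro j
        have : IdentDistrib (X j) (X 0) μ μ :=
          ⟨(hmeas j).aemeasurable, (hmeas 0).aemeasurable, hident j⟩
        rw [this.variance_eq, hvar]
      have : ∀ j ∈ Icc 1 n, variance (c j • X j) μ = (c j)^2 := by
        intro j _
        rw [variance_smul, hvj, mul_one]
      rw [Finset.sum_congr rfl this, div_pow, one_pow, Real.sq_sqrt (Nat.cast_nonneg n)]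
    · exact fun j _ => (hL2 j).const_smul (c j)
    · intro i hi j hj hij
      exact (hindep.indepFun hij).comp (measurable_const_mul (c i)) (measurable_const_mul (c j))
  · have h2 : Tendsto (fun n : ℕ => 2 - (n:ℝ)⁻¹ * ∑ i ∈ Icc 1 n, (1/(i:ℝ)))
        atTop (nhds 2) := by
      simpa using tendsto_const_nhds.sub harm_div
    apply h2.congr'
    filter_upwards [eventually_ge_atTop 1] with n hn
    have hn0 : (n:ℝ) ≠ 0 := by
      have : (0:ℝ) < n := by exact_mod_cast hn
      linarith
    rw [sum_w_sq]
    field_simp
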